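/- Let α ≤ β be infinite cardinals. Every Banach space of (α, β)-universal disposition is (α, β)-automorphic: for all Banach spaces A with density character < α and B with density character < β, and all linear topological embeddings (isomorphisms onto their ranges) u : A → E and i : A → B, there is a linear topological embedding u' : B → E with u' ∘ i = u. -/

import Mathlib

open Pointwise

universe u

section ExtNorm

variable {A B E : Type u} [NormedAddCommGroup A] [NormedSpace ℝ A]
  [NormedAddCommGroup B] [NormedSpace ℝ B] [NormedAddCommGroup E] [NormedSpace ℝ E]

/-- The extension norm on `B`. -/
noncomputable def extFun (u : A →L[ℝ] E) (i : A →L[ℝ] B) (K : ℝ) (b : B) : ℝ :=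
  sInf (Set.range fun a : A => ‖u a‖ + K * ‖b - i a‖)

variable (u : A →L[ℝ] E) (i : A →L[ℝ] B) {K : ℝ}

theorem extFun_set_nonempty (b : B) :
    (Set.range fun a : A => ‖u a‖ + K * ‖b - i a‖).Nonempty := ⟨_, 0, rfl⟩

theorem extFun_bddBelow (hK : 0 ≤ K) (b : B) :
    BddBelow (Set.range fun a : A => ‖u a‖ + K * ‖b - i a‖) := by
  refine ⟨0, ?_⟩
  rintro x ⟨a, rfl⟩
  positivity

theorem extFun_le (hK : 0 ≤ K) (b : B) (a : A) :
    extFun u i K b ≤ ‖u a‖ + K * ‖b - i a‖ :=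
  csInf_le (extFun_bddBelow u i hK b) ⟨a, rfl⟩

theorem le_extFun (b : B) {c : ℝ} (h : ∀ a : A, c ≤ ‖u a‖ + K * ‖b - i a‖) :
    c ≤ extFun u i K b :=
  le_csInf (extFun_set_nonempty u i b) (by rintro x ⟨a, rfl⟩; exact h a)

theorem extFun_nonneg (b : B) (hK : 0 ≤ K) : 0 ≤ extFun u i K b :=
  le_extFun u i b fun a => by positivity

theorem extFun_le_K (hK : 0 ≤ K) (b : B) : extFun u i K b ≤ K * ‖b‖ := by
  simpa using extFun_le u i hK b 0

theorem extFun_zero (hK : 0 ≤ K) : extFun u i K 0 = 0 :=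
  le_antisymm (by simpa using extFun_le_K u i hK 0) (extFun_nonneg u i 0 hK)

theorem extFun_add (hK : 0 ≤ K) (b₁ b₂ : B) :
    extFun u i K (b₁ + b₂) ≤ extFun u i K b₁ + extFun u i K b₂ := by
  have key : ∀ a₁ a₂ : A, extFun u i K (b₁ + b₂) ≤
      (‖u a₁‖ + K * ‖b₁ - i a₁‖) + (‖u a₂‖ + K * ‖b₂ - i a₂‖) := by
    intro a₁ a₂
    refine (extFun_le u i hK (b₁ + b₂) (a₁ + a₂)).trans ?_
    have h1 : ‖u (a₁ + a₂)‖ ≤ ‖u a₁‖ + ‖u a₂‖ := by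
      rw [map_add]; exact norm_add_le _ _
    have h2 : ‖(b₁ + b₂) - i (a₁ + a₂)‖ ≤ ‖b₁ - i a₁‖ + ‖b₂ - i a₂‖ := by
      rw [map_add]
      have e : b₁ + b₂ - (i a₁ + i a₂) = (b₁ - i a₁) + (b₂ - i a₂) := by abel
      rw [e]
      exact norm_add_le _ _
    nlinarith [norm_nonneg (b₁ - i a₁), norm_nonneg (b₂ - i a₂)]
  have h1 : extFun u i K (b₁ + b₂) - extFun u i K b₂ ≤ extFun u i K b₁ := by
    refine le_extFun u i b₁ ?_
    intro a₁
    rw [sub_le_iff_le_add, ← sub_le_iff_le_add']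
    refine le_extFun u i b₂ ?_
    intro a₂
    have := key a₁ a₂
    linarith
  linarith

theorem extFun_neg (hK : 0 ≤ K) (b : B) : extFun u i K (-b) = extFun u i K b := by
  have key : ∀ b' : B, extFun u i K (-b') ≤ extFun u i K b' := by
    intro b'
    refine le_extFun u i b' ?_
    intro a
    refine (extFun_le u i hK (-b') (-a)).trans_eq ?_
    rw [map_neg, map_neg, norm_neg]
    congr 2
    rw [← norm_neg (-b' - -i a)]
    congr 1
    abel
  have h2 := key (-b)
  rw [neg_neg] at h2
  exact le_antisymm (key b) h2

theorem extFun_smul (hK : 0 ≤ K) (c : ℝ) (b : B) :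
    extFun u i K (c • b) = |c| * extFun u i K b := by
  rcases eq_or_ne c 0 with rfl | hc
  · simp [extFun_zero u i hK]
  have key : ∀ a : A, ‖u (c • a)‖ + K * ‖c • b - i (c • a)‖
      = |c| * (‖u a‖ + K * ‖b - i a‖) := by
    intro a
    rw [map_smul, map_smul, ← smul_sub, norm_smul, norm_smul, Real.norm_eq_abs]
    ring
  have hrange : (Set.range fun a : A => ‖u a‖ + K * ‖c • b - i a‖)
      = |c| • (Set.range fun a : A => ‖u a‖ + K * ‖b - i a‖) := by
    ext x
    constructor
    · rintro ⟨a, rfl⟩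
      refine Set.mem_smul_set.mpr ⟨‖u (c⁻¹ • a)‖ + K * ‖b - i (c⁻¹ • a)‖, ⟨c⁻¹ • a, rfl⟩, ?_⟩
      simp only [smul_eq_mul]
      rw [← key (c⁻¹ • a), smul_inv_smul₀ hc]
    · rintro ⟨x, ⟨a, rfl⟩, rfl⟩
      exact ⟨c • a, by simpa [smul_eq_mul] using key a⟩
  rw [extFun, hrange, Real.sInf_smul_of_nonneg (abs_nonneg c), smul_eq_mul, extFun]

theorem extFun_apply_i (hK : 0 ≤ K) (hKui : ∀ x : A, ‖u x‖ ≤ K * ‖i x‖) (a₀ : A) :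
    extFun u i K (i a₀) = ‖u a₀‖ := by
  refine le_antisymm (by simpa using extFun_le u i hK (i a₀) a₀) ?_
  refine le_extFun u i (i a₀) ?_
  intro a
  have e : a₀ = a + (a₀ - a) := by abel
  have h1 : ‖u a₀‖ ≤ ‖u a‖ + ‖u (a₀ - a)‖ := by
    calc ‖u a₀‖ = ‖u a + u (a₀ - a)‖ := by rw [← map_add, ← e]
      _ ≤ _ := norm_add_le _ _
  have h2 : ‖u (a₀ - a)‖ ≤ K * ‖i a₀ - i a‖ := by
    rw [← map_sub]
    exact hKui _
  linarith

theorem extFun_lower {cu : ℝ} (hcu : 0 < cu) (hu : ∀ a : A, cu * ‖a‖ ≤ ‖u a‖)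
    (hK : 0 < K) (b : B) :
    min (cu / (‖i‖ + 1)) K * ‖b‖ ≤ extFun u i K b := by
  set m := min (cu / (‖i‖ + 1)) K with hm
  have hipos : (0:ℝ) < ‖i‖ + 1 := by positivity
  have hm0 : 0 < m := lt_min (by positivity) hK
  have hmc : m * (‖i‖ + 1) ≤ cu := by
    rw [← le_div_iff₀ hipos]
    exact min_le_left _ _
  refine le_extFun u i b ?_
  intro a
  have h1 : ‖b‖ ≤ ‖i a‖ + ‖b - i a‖ := by
    calc ‖b‖ = ‖i a + (b - i a)‖ := by congr 1; abel
      _ ≤ _ := norm_add_le _ _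
  have h2 : ‖i a‖ ≤ ‖i‖ * ‖a‖ := i.le_opNorm a
  have h3 : cu * ‖a‖ ≤ ‖u a‖ := hu a
  have h4 : m ≤ K := min_le_right _ _
  have h5 : 0 ≤ ‖a‖ := norm_nonneg a
  have h6 : 0 ≤ ‖b - i a‖ := norm_nonneg _
  nlinarith [norm_nonneg (i a)]

end ExtNorm

theorem uniformity_eq_renorm {X : Type u} [n2 : NormedAddCommGroup X] (f : AddGroupNorm X)
    (m K : ℝ) (hm : 0 < m) (hK : 0 < K)
    (hlow : ∀ x, m * ‖x‖ ≤ f x) (hup : ∀ x, f x ≤ K * ‖x‖) :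
    f.toNormedAddCommGroup.toMetricSpace.toPseudoMetricSpace.toUniformSpace
      = n2.toMetricSpace.toPseudoMetricSpace.toUniformSpace := by
  set n1 : NormedAddCommGroup X := f.toNormedAddCommGroup with hn1def
  refine UniformSpace.ext ?_
  have b1 := @Metric.uniformity_basis_dist X n1.toMetricSpace.toPseudoMetricSpace
  have b2 := @Metric.uniformity_basis_dist X n2.toMetricSpace.toPseudoMetricSpace
  have hd1 : ∀ x y : X, @dist X n1.toMetricSpace.toPseudoMetricSpace.toDist x y = f (x - y) :=
    fun x y => by
      show f (-x + y) = f (x - y)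
      rw [← map_neg_eq_map f (x - y), neg_sub]
      congr 1
      abel
  have hd2 : ∀ x y : X, @dist X n2.toMetricSpace.toPseudoMetricSpace.toDist x y =
      @norm X n2.toNorm (x - y) :=
    fun x y => @dist_eq_norm X n2.toSeminormedAddCommGroup x y
  refine b1.ext b2 ?_ ?_
  · intro ε hε
    refine ⟨ε / K, by positivity, ?_⟩
    intro p hp
    simp only [Set.mem_setOf_eq] at hp ⊢
    rw [hd2] at hp
    rw [hd1]
    have := hup (p.1 - p.2)
    rw [lt_div_iff₀ hK] at hp
    nlinarith
  · intro ε hε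
    refine ⟨m * ε, by positivity, ?_⟩
    intro p hp
    simp only [Set.mem_setOf_eq] at hp ⊢
    rw [hd1] at hp
    rw [hd2]
    have := hlow (p.1 - p.2)
    nlinarith

/-- A bundled Banach space over `ℝ`. -/
structure BanachSpace : Type (u + 1) where
  carrier : Type u
  [norm : NormedAddCommGroup carrier]
  [space : NormedSpace ℝ carrier]
  [complete : CompleteSpace carrier]

attribute [instance] BanachSpace.norm BanachSpace.space BanachSpace.complete

instance : CoeSort BanachSpace.{u} (Type u) := ⟨BanachSpace.carrier⟩

/-- A topological space has density character `< κ`: there is a dense subset of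
cardinality `< κ`. -/
def DensityLT (X : Type u) [TopologicalSpace X] (κ : Cardinal.{u}) : Prop :=
  ∃ s : Set X, Dense s ∧ Cardinal.mk s < κ

/-- Renorming a Banach space by an equivalent norm. -/
noncomputable def renormBanach (X : BanachSpace.{u}) (f : AddGroupNorm X.carrier)
    (hsmul : ∀ (c : ℝ) (x : X.carrier), f (c • x) = |c| * f x)
    (m K : ℝ) (hm : 0 < m) (hK : 0 < K)
    (hlow : ∀ x, m * ‖x‖ ≤ f x) (hup : ∀ x, f x ≤ K * ‖x‖) : BanachSpace.{u} where
  carrier := X.carrier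
  norm := f.toNormedAddCommGroup
  space := @NormedSpace.mk ℝ X.carrier _ f.toNormedAddCommGroup.toSeminormedAddCommGroup
    X.space.toModule (fun c x => le_of_eq (by
      show f (c • x) = ‖c‖ * f x
      rw [hsmul, Real.norm_eq_abs]))
  complete := by
    have h := uniformity_eq_renorm f m K hm hK hlow hup
    show @CompleteSpace X.carrier
      f.toNormedAddCommGroup.toMetricSpace.toPseudoMetricSpace.toUniformSpace
    rw [h]
    exact X.complete

theorem renormBanach_densityLT (X : BanachSpace.{u}) (f : AddGroupNorm X.carrier)
    (hsmul : ∀ (c : ℝ) (x : X.carrier), f (c • x) = |c| * f x)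
    (m K : ℝ) (hm : 0 < m) (hK : 0 < K)
    (hlow : ∀ x, m * ‖x‖ ≤ f x) (hup : ∀ x, f x ≤ K * ‖x‖)
    (κ : Cardinal.{u}) (h : DensityLT X.carrier κ) :
    DensityLT (renormBanach X f hsmul m K hm hK hlow hup).carrier κ := by
  obtain ⟨s, hs, hcard⟩ := h
  refine ⟨s, ?_, hcard⟩
  show @Dense X.carrier
    f.toNormedAddCommGroup.toMetricSpace.toPseudoMetricSpace.toUniformSpace.toTopologicalSpace s
  rw [congrArg (fun v : UniformSpace X.carrier => v.toTopologicalSpace)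
    (uniformity_eq_renorm f m K hm hK hlow hup)]
  exact hs

/-- `E` is `(α, β)₁`-injective: for every Banach space `B` with density character `< β` and
every closed subspace `A ⊆ B` of density character `< α`, every operator `t : A → E`
extends to `T : B → E` with `‖T‖ ≤ ‖t‖`. -/
def IsABInjective1 (α β : Cardinal.{u}) (E : BanachSpace.{u}) : Prop :=
  ∀ B : BanachSpace.{u}, DensityLT B.carrier β →
    ∀ A : Submodule ℝ B.carrier, IsClosed (A : Set B.carrier) → DensityLT A α →
      ∀ t : A →L[ℝ] E.carrier, ∃ T : B.carrier →L[ℝ] E.carrier,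
        (∀ a : A, T (a : B.carrier) = t a) ∧ ‖T‖ ≤ ‖t‖

/-- `U` is of `(α, β)`-universal disposition: given Banach spaces `A` of density character
`< α` and `B` of density character `< β` and isometric embeddings `u : A → U`, `i : A → B`,
there is an isometric embedding `u' : B → U` with `u' ∘ i = u`. -/
def IsABUnivDisp (α β : Cardinal.{u}) (U : BanachSpace.{u}) : Prop :=
  ∀ A B : BanachSpace.{u}, DensityLT A.carrier α → DensityLT B.carrier β →
    ∀ (u : A.carrier →ₗᵢ[ℝ] U.carrier) (i : A.carrier →ₗᵢ[ℝ] B.carrier),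
      ∃ u' : B.carrier →ₗᵢ[ℝ] U.carrier, ∀ a : A.carrier, u' (i a) = u a

/-- A continuous linear map is a linear topological embedding (an isomorphism onto its
range) iff it is bounded below. -/
def IsLinearTopEmbedding {A E : Type u} [NormedAddCommGroup A] [NormedSpace ℝ A]
    [NormedAddCommGroup E] [NormedSpace ℝ E] (u : A →L[ℝ] E) : Prop :=
  ∃ c : ℝ, 0 < c ∧ ∀ a : A, c * ‖a‖ ≤ ‖u a‖

/-- For infinite cardinals `α ≤ β`, every Banach space of `(α, β)`-universal disposition is
`(α, β)`-automorphic: linear topological embeddings extend as well. -/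
theorem abUnivDisp_abAutomorphic
    (α β : Cardinal.{u}) (hα : Cardinal.aleph0 ≤ α) (hαβ : α ≤ β)
    (E : BanachSpace.{u}) (hE : IsABUnivDisp α β E) :
    ∀ A B : BanachSpace.{u}, DensityLT A.carrier α → DensityLT B.carrier β →
      ∀ (u : A.carrier →L[ℝ] E.carrier) (i : A.carrier →L[ℝ] B.carrier),
        IsLinearTopEmbedding u → IsLinearTopEmbedding i →
          ∃ u' : B.carrier →L[ℝ] E.carrier, IsLinearTopEmbedding u' ∧
            ∀ a : A.carrier, u' (i a) = u a := by
  intro A B hA hB u i hu' hi'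
  obtain ⟨cu, hcu, hu⟩ := hu'
  obtain ⟨ci, hci, hi⟩ := hi'
  -- the renormed `A`
  have hKA : (0:ℝ) < ‖u‖ + 1 := by positivity
  set fA : AddGroupNorm A.carrier :=
    { toFun := fun a => ‖u a‖
      map_zero' := by simp
      add_le' := fun x y => by simpa [map_add] using norm_add_le (u x) (u y)
      neg' := fun x => by simp
      eq_zero_of_map_eq_zero' := fun x hx => by
        have h1 := hu x
        change ‖u x‖ = 0 at hx
        rw [hx] at h1
        have h2 : ‖x‖ ≤ 0 := by nlinarith
        exact norm_le_zero_iff.mp h2 } with hfA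
  have hsmulA : ∀ (c : ℝ) (x : A.carrier), fA (c • x) = |c| * fA x := by
    intro c x
    show ‖u (c • x)‖ = |c| * ‖u x‖
    rw [map_smul, norm_smul, Real.norm_eq_abs]
  have hlowA : ∀ x, cu * ‖x‖ ≤ fA x := fun x => hu x
  have hupA : ∀ x, fA x ≤ (‖u‖ + 1) * ‖x‖ := by
    intro x
    show ‖u x‖ ≤ _
    nlinarith [u.le_opNorm x, norm_nonneg x]
  -- the constant `K` and the renormed `B`
  set K : ℝ := (‖u‖ + 1) / ci with hKdef
  have hK0 : 0 < K := by positivity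
  have hKui : ∀ x, ‖u x‖ ≤ K * ‖i x‖ := by
    intro x
    have h1 : K * (ci * ‖x‖) ≤ K * ‖i x‖ := mul_le_mul_of_nonneg_left (hi x) hK0.le
    have h2 : K * ci = ‖u‖ + 1 := div_mul_cancel₀ _ (ne_of_gt hci)
    have h3 := u.le_opNorm x
    nlinarith [norm_nonneg x]
  set m : ℝ := min (cu / (‖i‖ + 1)) K with hmdef
  have hm0 : 0 < m := lt_min (by positivity) hK0
  set fB : AddGroupNorm B.carrier :=
    { toFun := extFun u i K
      map_zero' := extFun_zero u i hK0.le
      add_le' := extFun_add u i hK0.le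
      neg' := extFun_neg u i hK0.le
      eq_zero_of_map_eq_zero' := fun b hb => by
        have h1 := extFun_lower u i hcu hu hK0 b
        change extFun u i K b = 0 at hb
        rw [hb] at h1
        have hm0' : 0 < min (cu / (‖i‖ + 1)) K := lt_min (by positivity) hK0
        have h2 : ‖b‖ ≤ 0 := by nlinarith [norm_nonneg b]
        exact norm_le_zero_iff.mp h2 } with hfB
  have hsmulB : ∀ (c : ℝ) (x : B.carrier), fB (c • x) = |c| * fB x :=
    fun c x => extFun_smul u i hK0.le c x
  have hlowB : ∀ b, m * ‖b‖ ≤ fB b := fun b => extFun_lower u i hcu hu hK0 b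
  have hupB : ∀ b, fB b ≤ K * ‖b‖ := fun b => extFun_le_K u i hK0.le b
  set A' : BanachSpace.{u} := renormBanach A fA hsmulA cu (‖u‖ + 1) hcu hKA hlowA hupA with hA'
  set B' : BanachSpace.{u} := renormBanach B fB hsmulB m K hm0 hK0 hlowB hupB with hB'
  have dA' : DensityLT A'.carrier α :=
    renormBanach_densityLT A fA hsmulA cu (‖u‖ + 1) hcu hKA hlowA hupA α hA
  have dB' : DensityLT B'.carrier β :=
    renormBanach_densityLT B fB hsmulB m K hm0 hK0 hlowB hupB β hB
  -- the isometric embeddings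
  set u₁ : A'.carrier →ₗᵢ[ℝ] E.carrier :=
    { toFun := ⇑u
      map_add' := fun x y => u.map_add x y
      map_smul' := fun c x => u.map_smul c x
      norm_map' := fun a => rfl } with hu₁
  set i₁ : A'.carrier →ₗᵢ[ℝ] B'.carrier :=
    { toFun := ⇑i
      map_add' := fun x y => i.map_add x y
      map_smul' := fun c x => i.map_smul c x
      norm_map' := fun a => extFun_apply_i u i hK0.le hKui a } with hi₁
  obtain ⟨v, hv⟩ := hE A' B' dA' dB' u₁ i₁
  refine ⟨LinearMap.mkContinuous
    { toFun := ⇑v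
      map_add' := fun x y => v.map_add x y
      map_smul' := fun c x => v.map_smul c x } K
    (fun b => le_trans (le_of_eq (v.norm_map b)) (extFun_le_K u i hK0.le b)),
    ⟨m, hm0, fun b => le_trans (extFun_lower u i hcu hu hK0 b)
      (le_of_eq (v.norm_map b).symm)⟩,
    fun a => hv a⟩
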